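/- arXiv:math/0503727 — 4 statements merged into one kernel-verified Lean document; each statement's English description precedes it below -/
import Mathlib

section
/- For every integer θ ≥ 0 (with the convention c_{−1} = 0), one has c_θ − c_{θ−1} = t^θ · (t⁻¹;q)_θ (t⁻¹ s;q)_θ / ((q;q)_θ (q s;q)_θ) · (1 − q^{2θ} t⁻¹ s) / (1 − t⁻¹ s). -/
/-- the difference `c θ - c (θ-1)` (with `c (-1) = 0`) in closed form;
this recovers Jing and Józefiak's formula for two-row Macdonald polynomials. -/
theorem stmt_1 {F : Type*} [Field F] (q t s : F) (hq : q ≠ 0) (ht : t ≠ 0) (hs : s ≠ 0)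
    (h1 : ∀ m : ℕ, 1 ≤ m → 1 - q ^ m ≠ 0)
    (h2 : ∀ m : ℕ, 1 ≤ m → 1 - q ^ m * s ≠ 0)
    (h3 : ∀ m : ℕ, 1 ≤ m → 1 - q ^ m * t⁻¹ ≠ 0)
    (h4 : ∀ m : ℕ, 1 ≤ m → 1 - q ^ m * t⁻¹ * s ≠ 0)
    (h5 : 1 - t⁻¹ * s ≠ 0)
    (c : ℤ → F)
    (hneg : ∀ θ : ℤ, θ < 0 → c θ = 0)
    (hc : ∀ θ : ℕ, c θ = t ^ θ *
      ((∏ i ∈ Finset.range θ, (1 - q * t⁻¹ * q ^ i)) *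
       (∏ i ∈ Finset.range θ, (1 - q * t⁻¹ * s * q ^ i))) /
      ((∏ i ∈ Finset.range θ, (1 - q * q ^ i)) *
       (∏ i ∈ Finset.range θ, (1 - q * s * q ^ i))))
    (θ : ℕ) :
    c θ - c ((θ : ℤ) - 1) = t ^ θ *
      ((∏ i ∈ Finset.range θ, (1 - t⁻¹ * q ^ i)) *
       (∏ i ∈ Finset.range θ, (1 - t⁻¹ * s * q ^ i))) /
      ((∏ i ∈ Finset.range θ, (1 - q * q ^ i)) *
       (∏ i ∈ Finset.range θ, (1 - q * s * q ^ i))) *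
      ((1 - q ^ (2 * θ) * t⁻¹ * s) / (1 - t⁻¹ * s)) := by
  cases θ with
  | zero =>
    rw [show ((0 : ℕ) : ℤ) - 1 = -1 by norm_num, hneg (-1) (by norm_num), hc 0]
    simp [div_self h5]
  | succ n =>
    rw [show (((n + 1 : ℕ) : ℤ)) - 1 = ((n : ℕ) : ℤ) by push_cast; ring,
      hc (n + 1), hc n]
    have key1 : ∏ i ∈ Finset.range (n + 1), (1 - t⁻¹ * q ^ i)
        = (1 - t⁻¹) * ∏ i ∈ Finset.range n, (1 - q * t⁻¹ * q ^ i) := by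
      rw [Finset.prod_range_succ']
      simp only [pow_zero, mul_one]
      rw [mul_comm]
      congr 1
      exact Finset.prod_congr rfl fun i _ => by ring
    have key2 : ∏ i ∈ Finset.range (n + 1), (1 - t⁻¹ * s * q ^ i)
        = (1 - t⁻¹ * s) * ∏ i ∈ Finset.range n, (1 - q * t⁻¹ * s * q ^ i) := by
      rw [Finset.prod_range_succ']
      simp only [pow_zero, mul_one]
      rw [mul_comm]
      congr 1
      exact Finset.prod_congr rfl fun i _ => by ring
    rw [key1, key2]
    simp only [Finset.prod_range_succ]
    have hD1 : (∏ i ∈ Finset.range n, (1 - q * q ^ i)) ≠ 0 :=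
      Finset.prod_ne_zero_iff.mpr fun i _ => by
        have := h1 (i + 1) (by omega); rwa [pow_succ'] at this
    have hD2 : (∏ i ∈ Finset.range n, (1 - q * s * q ^ i)) ≠ 0 :=
      Finset.prod_ne_zero_iff.mpr fun i _ => by
        have := h2 (i + 1) (by omega)
        rw [show (1 : F) - q * s * q ^ i = 1 - q ^ (i + 1) * s by ring]; exact this
    have hd1 : (1 - q * q ^ n) ≠ 0 := by
      have := h1 (n + 1) (by omega); rwa [pow_succ'] at this
    have hd2 : (1 - q * s * q ^ n) ≠ 0 := by
      have := h2 (n + 1) (by omega)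
      rw [show (1 : F) - q * s * q ^ n = 1 - q ^ (n + 1) * s by ring]; exact this
    have ht5 : t - s ≠ 0 := by
      have := mul_ne_zero ht h5
      rwa [mul_sub, mul_one, ← mul_assoc, mul_inv_cancel₀ ht, one_mul] at this
    set P1 := ∏ i ∈ Finset.range n, (1 - q * t⁻¹ * q ^ i) with hP1
    set P2 := ∏ i ∈ Finset.range n, (1 - q * t⁻¹ * s * q ^ i) with hP2
    set D1 := ∏ i ∈ Finset.range n, (1 - q * q ^ i) with hD1'
    set D2 := ∏ i ∈ Finset.range n, (1 - q * s * q ^ i) with hD2'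
    have hB : (D1 * (1 - q * q ^ n)) * (D2 * (1 - q * s * q ^ n)) ≠ 0 :=
      mul_ne_zero (mul_ne_zero hD1 hd1) (mul_ne_zero hD2 hd2)
    have hDd : D1 * D2 ≠ 0 := mul_ne_zero hD1 hD2
    rw [div_sub_div _ _ hB hDd, div_mul_div_comm,
      div_eq_div_iff (mul_ne_zero hB hDd) (mul_ne_zero hB h5)]
    field_simp
    ring
end

section
/- The formal power series f(x) = (1 − x) · ∑_{θ≥0} c_θ x^θ ∈ F[[x]] satisfies the identity of formal power series s₁ · (1 − q t⁻¹ x)(1 − q⁻¹ x) · f(q x) + s₂ · (1 − q⁻¹ t x)(1 − q x) · f(q⁻¹ x) = (s₁ + s₂) · (1 − q x)(1 − q⁻¹ x) · f(x), where f(q x) and f(q⁻¹ x) denote the series obtained from f by rescaling the variable x by q and q⁻¹ respectively. (This is the n = 2 case of the eigenfunction equation D¹ f = (s₁ + s₂) f for the modified Macdonald difference operator.) -/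
set_option maxHeartbeats 1000000

open PowerSeries Finset

section Helpers
variable {F : Type*} [Field F]

lemma quad_expand (a b : F) : (1 - C a * X) * (1 - C b * X)
    = 1 - C (a+b) * X + C (a*b) * (X*X) := by
  simp only [map_add, map_mul]; ring

lemma coeff_quad_succ_succ (a b : F) (g : PowerSeries F) (n : ℕ) :
    (coeff (n+2)) ((1 - C a * X) * (1 - C b * X) * g) =
      coeff (n+2) g - (a+b) * coeff (n+1) g + a*b* coeff n g := by
  rw [quad_expand, add_mul, sub_mul, one_mul, map_add, map_sub,
    mul_assoc, coeff_C_mul, mul_assoc, coeff_C_mul,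
    coeff_succ_X_mul, mul_assoc X X g, coeff_succ_X_mul, coeff_succ_X_mul, mul_assoc]

lemma coeff_quad_one (a b : F) (g : PowerSeries F) :
    (coeff 1) ((1 - C a * X) * (1 - C b * X) * g) =
      coeff 1 g - (a+b) * coeff 0 g := by
  rw [quad_expand, add_mul, sub_mul, one_mul, map_add, map_sub,
    mul_assoc, coeff_C_mul, mul_assoc, coeff_C_mul]
  rw [show (1:ℕ) = 0 + 1 from rfl, coeff_succ_X_mul, mul_assoc X X g, coeff_succ_X_mul]
  simp [coeff_zero_eq_constantCoeff]

lemma coeff_quad_zero (a b : F) (g : PowerSeries F) :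
    (coeff 0) ((1 - C a * X) * (1 - C b * X) * g) = coeff 0 g := by
  rw [quad_expand, add_mul, sub_mul, one_mul, map_add, map_sub]
  simp [coeff_zero_eq_constantCoeff]

end Helpers

lemma key3 {F : Type*} [Field F] (q qi t ti s₁ s₂ u v c1 c2 c3 c4 : F)
    (hqi : q * qi = 1) (hti : t * ti = 1) (huv : u * v = 1)
    (r1 : c2 * ((1 - u) * (s₂ - u * s₁)) * t = c1 * ((t - u) * (t * s₂ - u * s₁)))
    (r2 : c3 * ((1 - u*q) * (s₂ - u*q * s₁)) * t = c2 * ((t - u*q) * (t * s₂ - u*q * s₁)))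
    (r3 : c4 * ((1 - u*q*q) * (s₂ - u*q*q * s₁)) * t = c3 * ((t - u*q*q) * (t * s₂ - u*q*q * s₁))) :
    s₁ * (u*q*q * (c4 - c3) - (q*ti + qi) * (u*q * (c3 - c2)) + (q*ti*qi) * (u * (c2 - c1)))
      + s₂ * (v*qi*qi * (c4 - c3) - (qi*t + q) * (v*qi * (c3 - c2)) + (qi*t*q) * (v * (c2 - c1)))
      = (s₁+s₂) * ((c4 - c3) - (q + qi) * (c3 - c2) + (q*qi) * (c2 - c1)) := by
  linear_combination (ti*v*qi*qi)*r3 - (ti*v*qi*qi+ti*v)*r2 + (ti*v)*r1 +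
    (-s₂*c2 + s₂*c1 - s₁*c2 + s₁*c1 - v*s₂*c3 + v*s₂*c2 - u*s₁*c3 + u*s₁*c2 + ti*u*s₁*c2 - ti*u*s₁*c1 - ti*u^2*v*s₁*c2 + t*v*s₂*c2 - t*v*s₂*c1 + t*ti*u*v*s₂*c4 - t*ti*u*v*s₂*c3 + t*ti*u*v*s₁*c4 - t*ti*u*v*s₁*c3 + t*ti*u^2*v*s₁*c3 - qi*t*ti*u*v*s₂*c3 + qi*t*ti*u*v*s₂*c2 - qi*t*ti*u*v*s₁*c3 + qi*t*ti*u*v*s₁*c2 - q*qi*ti*u^2*v*s₁*c2 + q*qi*t*ti*u*v*s₂*c4 - q*qi*t*ti*u*v*s₂*c3 + q*qi*t*ti*u*v*s₁*c4 - q*qi*t*ti*u*v*s₁*c3 + q*qi*t*ti*u^2*v*s₁*c3 + q^2*ti*u^2*v*s₁*c3 - q^2*t*ti*u^2*v*s₁*c4 + q^3*qi*ti*u^2*v*s₁*c3 - q^3*qi*t*ti*u^2*v*s₁*c4)*hqi +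
    (v*s₂*c3 - v*s₂*c2 + u*v*s₂*c4 - u*v*s₂*c3 + u*v*s₂*c2 - u*v*s₂*c1 + u*v*s₁*c4 - u*v*s₁*c3 + u*v*s₁*c2 - u*v*s₁*c1 + u^2*v*s₁*c3 - u^2*v*s₁*c2 - t*v*s₂*c2 + t*v*s₂*c1 - qi*u*v*s₂*c3 + qi*u*v*s₂*c2 - qi*u*v*s₁*c3 + qi*u*v*s₁*c2 - qi^2*v*s₂*c4 + qi^2*v*s₂*c3 + qi^2*t*v*s₂*c3 - qi^2*t*v*s₂*c2 - q*u*v*s₂*c3 + q*u*v*s₂*c2 - q*u*v*s₁*c3 + q*u*v*s₁*c2 - q^2*u^2*v*s₁*c4 + q^2*u^2*v*s₁*c3)*hti +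
    (s₂*c4 - s₂*c3 + s₂*c2 - s₂*c1 + s₁*c4 - s₁*c3 + s₁*c2 - s₁*c1 + u*s₁*c3 - u*s₁*c2 - ti*u*s₁*c2 + ti*u*s₁*c1 - qi*s₂*c3 + qi*s₂*c2 - qi*s₁*c3 + qi*s₁*c2 - q*s₂*c3 + q*s₂*c2 - q*s₁*c3 + q*s₁*c2 - q^2*u*s₁*c4 + q^2*u*s₁*c3 + q^2*ti*u*s₁*c3 - q^2*ti*u*s₁*c2)*huv

/-- the formal power series `f(x) = (1-x) ∑_θ c_θ x^θ` satisfies the `n = 2`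
eigenfunction equation of the modified Macdonald difference operator `D¹`. -/
theorem stmt_2 {F : Type*} [Field F] (q t s₁ s₂ : F)
    (hq : q ≠ 0) (ht : t ≠ 0) (hs₁ : s₁ ≠ 0) (hs₂ : s₂ ≠ 0)
    (h1 : ∀ m : ℕ, 1 ≤ m → 1 - q ^ m ≠ 0)
    (h2 : ∀ m : ℕ, 1 ≤ m → 1 - q ^ m * (s₁ / s₂) ≠ 0)
    (h3 : ∀ m : ℕ, 1 ≤ m → 1 - q ^ m * t⁻¹ ≠ 0)
    (h4 : ∀ m : ℕ, 1 ≤ m → 1 - q ^ m * t⁻¹ * (s₁ / s₂) ≠ 0)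
    (c : ℕ → F)
    (hc : ∀ θ : ℕ, c θ = t ^ θ *
      ((∏ i ∈ Finset.range θ, (1 - q * t⁻¹ * q ^ i)) *
       (∏ i ∈ Finset.range θ, (1 - q * t⁻¹ * (s₁ / s₂) * q ^ i))) /
      ((∏ i ∈ Finset.range θ, (1 - q * q ^ i)) *
       (∏ i ∈ Finset.range θ, (1 - q * (s₁ / s₂) * q ^ i))))
    (f : PowerSeries F)
    (hf : f = (1 - PowerSeries.X) * PowerSeries.mk c) :
    PowerSeries.C (R := F) s₁ *
        ((1 - PowerSeries.C (R := F) (q * t⁻¹) * PowerSeries.X) *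
         (1 - PowerSeries.C (R := F) q⁻¹ * PowerSeries.X)) * PowerSeries.rescale q f
      + PowerSeries.C (R := F) s₂ *
        ((1 - PowerSeries.C (R := F) (q⁻¹ * t) * PowerSeries.X) *
         (1 - PowerSeries.C (R := F) q * PowerSeries.X)) * PowerSeries.rescale q⁻¹ f
      = PowerSeries.C (R := F) (s₁ + s₂) *
        ((1 - PowerSeries.C (R := F) q * PowerSeries.X) *
         (1 - PowerSeries.C (R := F) q⁻¹ * PowerSeries.X)) * f := by
  -- nonzeroness of products
  have hPa : ∀ m, (∏ i ∈ Finset.range m, (1 - q * q ^ i)) ≠ 0 := by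
    intro m
    refine Finset.prod_ne_zero_iff.mpr fun i _ => ?_
    intro h; exact h1 (i+1) (by omega) (by rw [← h]; ring)
  have hPb : ∀ m, (∏ i ∈ Finset.range m, (1 - q * (s₁ / s₂) * q ^ i)) ≠ 0 := by
    intro m
    refine Finset.prod_ne_zero_iff.mpr fun i _ => ?_
    intro h; exact h2 (i+1) (by omega) (by rw [← h]; ring)
  -- the recurrence
  have hrec : ∀ θ : ℕ, c (θ+1) * ((1 - q^(θ+1)) * (1 - q^(θ+1)*(s₁/s₂)))
      = c θ * (t * ((1 - q^(θ+1)*t⁻¹) * (1 - q^(θ+1)*t⁻¹*(s₁/s₂)))) := by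
    intro θ
    have fa : (1 - q * q ^ θ) ≠ 0 := by
      intro h; exact h1 (θ+1) (by omega) (by rw [← h]; ring)
    have fb : (1 - q * (s₁/s₂) * q ^ θ) ≠ 0 := by
      intro h; exact h2 (θ+1) (by omega) (by rw [← h]; ring)
    have H0 : c θ * ((∏ i ∈ Finset.range θ, (1 - q * q ^ i)) *
         (∏ i ∈ Finset.range θ, (1 - q * (s₁ / s₂) * q ^ i)))
        = t ^ θ * ((∏ i ∈ Finset.range θ, (1 - q * t⁻¹ * q ^ i)) *
         (∏ i ∈ Finset.range θ, (1 - q * t⁻¹ * (s₁ / s₂) * q ^ i))) := by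
      rw [hc θ]; exact div_mul_cancel₀ _ (mul_ne_zero (hPa θ) (hPb θ))
    have H1 : c (θ+1) * ((∏ i ∈ Finset.range (θ+1), (1 - q * q ^ i)) *
         (∏ i ∈ Finset.range (θ+1), (1 - q * (s₁ / s₂) * q ^ i)))
        = t ^ (θ+1) * ((∏ i ∈ Finset.range (θ+1), (1 - q * t⁻¹ * q ^ i)) *
         (∏ i ∈ Finset.range (θ+1), (1 - q * t⁻¹ * (s₁ / s₂) * q ^ i))) := by
      rw [hc (θ+1)]; exact div_mul_cancel₀ _ (mul_ne_zero (hPa (θ+1)) (hPb (θ+1)))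
    rw [Finset.prod_range_succ, Finset.prod_range_succ,
      Finset.prod_range_succ, Finset.prod_range_succ] at H1
    refine mul_right_cancel₀ (mul_ne_zero (hPa θ) (hPb θ)) ?_
    linear_combination H1 - (t * ((1 - q^(θ+1)*t⁻¹) * (1 - q^(θ+1)*t⁻¹*(s₁/s₂)))) * H0
  have hrecP : ∀ θ : ℕ, c (θ+1) * ((1 - q^(θ+1)) * (s₂ - q^(θ+1)*s₁)) * t
      = c θ * ((t - q^(θ+1)) * (t*s₂ - q^(θ+1)*s₁)) := by
    intro θ
    have h := hrec θ
    field_simp at h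
    refine mul_right_cancel₀ (mul_ne_zero ht hs₂) ?_
    linear_combination (t * s₂) * h
  have hf0 : (coeff 0) f = c 0 := by
    rw [hf, sub_mul, one_mul, map_sub]
    simp [coeff_zero_eq_constantCoeff]
  have hfs : ∀ k : ℕ, (coeff (k+1)) f = c (k+1) - c k := by
    intro k
    rw [hf, sub_mul, one_mul, map_sub, coeff_succ_X_mul, coeff_mk, coeff_mk]
  ext n
  rw [map_add]
  match n with
  | 0 =>
    rw [mul_assoc (C s₁), mul_assoc (C s₂), mul_assoc (C (s₁+s₂)), coeff_C_mul, coeff_C_mul, coeff_C_mul,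
      coeff_quad_zero, coeff_quad_zero, coeff_quad_zero, coeff_rescale, coeff_rescale, hf0]
    ring
  | 1 =>
    rw [mul_assoc (C s₁), mul_assoc (C s₂), mul_assoc (C (s₁+s₂)), coeff_C_mul, coeff_C_mul, coeff_C_mul,
      coeff_quad_one, coeff_quad_one, coeff_quad_one,
      coeff_rescale, coeff_rescale, coeff_rescale, coeff_rescale,
      hf0, hfs 0]
    have r1 := hrecP 0
    rw [pow_one] at r1
    field_simp
    linear_combination r1
  | 2 =>
    rw [mul_assoc (C s₁), mul_assoc (C s₂), mul_assoc (C (s₁+s₂)), coeff_C_mul, coeff_C_mul, coeff_C_mul,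
      coeff_quad_succ_succ, coeff_quad_succ_succ, coeff_quad_succ_succ,
      coeff_rescale, coeff_rescale, coeff_rescale, coeff_rescale,
      coeff_rescale, coeff_rescale, hf0, hfs 0, hfs 1]
    have r1 := hrecP 0
    have r2 := hrecP 1
    rw [pow_one] at r1
    norm_num only at r1 r2 ⊢
    field_simp
    linear_combination r2 - (1+q^2) * r1
  | (n+3) =>
    rw [mul_assoc (C s₁), mul_assoc (C s₂), mul_assoc (C (s₁+s₂)), coeff_C_mul, coeff_C_mul, coeff_C_mul,
      coeff_quad_succ_succ, coeff_quad_succ_succ, coeff_quad_succ_succ,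
      coeff_rescale, coeff_rescale, coeff_rescale, coeff_rescale,
      coeff_rescale, coeff_rescale,
      hfs (n+2), hfs (n+1), hfs n]
    have r1 := hrecP n
    have r2 := hrecP (n+1)
    have r3 := hrecP (n+2)
    rw [pow_succ q (n+1)] at r2
    rw [pow_succ q (n+2), pow_succ q (n+1)] at r3
    have K := key3 q q⁻¹ t t⁻¹ s₁ s₂ (q^(n+1)) ((q⁻¹)^(n+1)) (c n) (c (n+1)) (c (n+2)) (c (n+3))
      (mul_inv_cancel₀ hq) (mul_inv_cancel₀ ht)
      (by rw [← mul_pow, mul_inv_cancel₀ hq, one_pow]) r1 r2 r3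
    linear_combination K
end

section
/- For every integer θ ≥ 0 (with the convention c_{−1} = 0), setting u = t⁻¹ s and v = q^θ u, Lassalle and Schlosser's one-variable coefficient C^{(q,t)}_θ(u) = t^θ · ((q t⁻¹;q)_θ/(q;q)_θ) · ((q u;q)_θ/(q t u;q)_θ) · (1 − ((1 − t v)/(1 − v)) · ((u − v)/(t u − v))) equals c_θ − c_{θ−1}. (This proves the agreement of the conjectured raising-operator coefficients with Lassalle–Schlosser's formula for n = 2.) -/
/-- Lassalle and Schlosser's one-variable coefficient `C^{(q,t)}_θ(u)` with
`u = t⁻¹ s`, `v = q^θ u` equals `c θ - c (θ-1)` (with `c (-1) = 0`); this is the agreement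
with the conjectured raising-operator coefficients for `n = 2`. -/
theorem stmt_3 {F : Type*} [Field F] (q t s : F) (hq : q ≠ 0) (ht : t ≠ 0) (hs : s ≠ 0)
    (h1 : ∀ m : ℕ, 1 ≤ m → 1 - q ^ m ≠ 0)
    (h2 : ∀ m : ℕ, 1 ≤ m → 1 - q ^ m * s ≠ 0)
    (h3 : ∀ m : ℕ, 1 ≤ m → 1 - q ^ m * t⁻¹ ≠ 0)
    (h4 : ∀ m : ℕ, 1 ≤ m → 1 - q ^ m * t⁻¹ * s ≠ 0)
    (h5 : ∀ θ : ℕ, 1 - q ^ θ * t⁻¹ * s ≠ 0)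
    (h6 : ∀ θ : ℕ, t - q ^ θ ≠ 0)
    (c : ℤ → F)
    (hneg : ∀ θ : ℤ, θ < 0 → c θ = 0)
    (hc : ∀ θ : ℕ, c θ = t ^ θ *
      ((∏ i ∈ Finset.range θ, (1 - q * t⁻¹ * q ^ i)) *
       (∏ i ∈ Finset.range θ, (1 - q * t⁻¹ * s * q ^ i))) /
      ((∏ i ∈ Finset.range θ, (1 - q * q ^ i)) *
       (∏ i ∈ Finset.range θ, (1 - q * s * q ^ i))))
    (θ : ℕ) (u v : F) (hu : u = t⁻¹ * s) (hv : v = q ^ θ * u) :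
    t ^ θ * ((∏ i ∈ Finset.range θ, (1 - q * t⁻¹ * q ^ i)) /
             (∏ i ∈ Finset.range θ, (1 - q * q ^ i))) *
      ((∏ i ∈ Finset.range θ, (1 - q * u * q ^ i)) /
       (∏ i ∈ Finset.range θ, (1 - q * t * u * q ^ i))) *
      (1 - (1 - t * v) / (1 - v) * ((u - v) / (t * u - v)))
    = c θ - c ((θ : ℤ) - 1) := by
  subst hu hv
  have hB : ∀ m : ℕ, (∏ i ∈ Finset.range m, (1 - q * q ^ i)) ≠ 0 := by
    intro m
    refine Finset.prod_ne_zero_iff.mpr fun i _ h => h1 (i+1) (by omega) ?_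
    linear_combination h
  have hD : ∀ m : ℕ, (∏ i ∈ Finset.range m, (1 - q * s * q ^ i)) ≠ 0 := by
    intro m
    refine Finset.prod_ne_zero_iff.mpr fun i _ h => h2 (i+1) (by omega) ?_
    linear_combination h
  have hts : t * (t⁻¹ * s) = s := mul_inv_cancel_left₀ ht s
  cases θ with
  | zero =>
    have h0 := hneg (-1) (by norm_num)
    have hc0 := hc 0
    norm_num at hc0 ⊢
    rw [hc0, h0]
    simp [hts]
  | succ n =>
    have key : ((n+1 : ℕ) : ℤ) - 1 = (n : ℕ) := by push_cast; ring
    rw [key, hc (n+1), hc n]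
    have hts2 : ∀ x : F, q * t * (t⁻¹ * s) * x = q * s * x := fun x => by
      rw [mul_assoc q t, hts]
    have hts3 : ∀ x : F, q * (t⁻¹ * s) * x = q * t⁻¹ * s * x := fun x => by ring
    simp only [hts, hts2, hts3, Finset.prod_range_succ, pow_succ]
    have e1 : 1 - q ^ n * q * (t⁻¹ * s) ≠ 0 := by
      have h' := h5 (n+1); rw [pow_succ] at h'
      intro h; exact h' (by linear_combination h)
    have e2 : s - q ^ n * q * (t⁻¹ * s) ≠ 0 := by
      have h' := h6 (n+1); rw [pow_succ] at h'
      have heq : s - q ^ n * q * (t⁻¹ * s) = t⁻¹ * s * (t - q ^ n * q) := by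
        field_simp
      rw [heq]
      exact mul_ne_zero (mul_ne_zero (inv_ne_zero ht) hs) h'
    have e3 : 1 - q * q ^ n ≠ 0 := by
      have h' := h1 (n+1) (by omega); intro h; exact h' (by linear_combination h)
    have e4 : 1 - q * s * q ^ n ≠ 0 := by
      have h' := h2 (n+1) (by omega); intro h; exact h' (by linear_combination h)
    have hBn := hB n
    have hDn := hD n
    generalize hP1 : (∏ i ∈ Finset.range n, (1 - q * t⁻¹ * q ^ i)) = A
    generalize hP2 : (∏ i ∈ Finset.range n, (1 - q * t⁻¹ * s * q ^ i)) = C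
    generalize hP3 : (∏ i ∈ Finset.range n, (1 - q * q ^ i)) = B
    generalize hP4 : (∏ i ∈ Finset.range n, (1 - q * s * q ^ i)) = D
    rw [hP3] at hBn
    rw [hP4] at hDn
    generalize hK : q ^ n = K at e1 e2 e3 e4 ⊢
    generalize hT : t ^ n = T
    have hcy : (1 - K * q * (t⁻¹ * s)) * (s - K * q * (t⁻¹ * s)) ≠ 0 := mul_ne_zero e1 e2
    have hY1 : (B * (1 - q * K)) * (D * (1 - q * s * K)) ≠ 0 :=
      mul_ne_zero (mul_ne_zero hBn e3) (mul_ne_zero hDn e4)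
    have hY2 : B * D ≠ 0 := mul_ne_zero hBn hDn
    rw [div_mul_div_comm, one_sub_div hcy, div_sub_div _ _ hY1 hY2]
    simp only [mul_div_assoc', div_mul_div_comm, div_mul_eq_mul_div, div_div]
    rw [div_eq_div_iff (mul_ne_zero hY1 hcy) (mul_ne_zero hY1 hY2)]
    field_simp
end

section
/- When q = 0, the hypergeometric-type series f(x₁,x₂,x₃; s₁,s₂,s₃, 0, t) equals ∏_{1≤i<j≤3} (1 − x_j/x_i)/(1 − t x_j/x_i); that is, in F[[y,w]] one has ∑_{k≥0} [ (q t⁻¹;q)_k² (t;q)_k² / ((q;q)_k (q s₁/s₂;q)_k (q s₂/s₃;q)_k (q s₁/s₃;q)_k) ] (q s₁/s₃)^k (y w)^k · (1−y)(1−yw)(1−w) · ∏_{1≤i<j≤3} ₂φ₁(q^{k+1} t⁻¹, q t⁻¹ s_i/s_j; q^{k+1} s_i/s_j; q, t·r_{ij}) evaluated at q = 0 equals (1−y)(1−yw)(1−w) · ∏_{1≤i<j≤3} (∑_{n≥0} t^n r_{ij}^n), where r₁₂ = y, r₂₃ = w, r₁₃ = y w. (This recovers Hall–Littlewood-type factors,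 since at q = 0 each ₂φ₁ factor equals 1/(1 − t r_{ij}) and only the k = 0 term survives.) -/
/-- The q-shifted factorial `(a;q)_m = ∏_{i=0}^{m-1} (1 - a q^i)`. -/
noncomputable def qPoch {F : Type*} [Field F] (q a : F) (m : ℕ) : F :=
  ∏ i ∈ Finset.range m, (1 - a * q ^ i)

/-- The sum `∑_{k ≥ 0} term k` of a family of formal power series in `F[[y,w]]`, each
`term k` being divisible by a monomial of total degree at least `k` (so that the
coefficient of a fixed monomial only receives finitely many contributions).  It is
defined coefficient-wise:  the coefficient on `y^p w^r` is the (finite) sum of the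
corresponding coefficients of `term k` for `k ≤ p + r`. -/
noncomputable def seriesSum {F : Type*} [Field F]
    (term : ℕ → MvPowerSeries (Fin 2) F) : MvPowerSeries (Fin 2) F :=
  fun e => ∑ k ∈ Finset.range (e 0 + e 1 + 1), MvPowerSeries.coeff (R := F) e (term k)

/-- The basic hypergeometric series `₂φ₁(a, b; c; q, x) = ∑_{n≥0} ((a;q)_n (b;q)_n /
((q;q)_n (c;q)_n)) xⁿ` regarded as a formal power series, specialized at an element
`x` of `F[[y,w]]` (of positive order). -/
noncomputable def phi21 {F : Type*} [Field F] (q a b c : F)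
    (x : MvPowerSeries (Fin 2) F) : MvPowerSeries (Fin 2) F :=
  seriesSum fun n => MvPowerSeries.C (σ := Fin 2) (R := F)
      (qPoch q a n * qPoch q b n / (qPoch q q n * qPoch q c n)) * x ^ n

lemma seriesSum_eq_zero_term {F : Type*} [Field F] (term : ℕ → MvPowerSeries (Fin 2) F)
    (h : ∀ k, k ≠ 0 → term k = 0) : seriesSum term = term 0 := by
  funext e
  show ∑ k ∈ Finset.range (e 0 + e 1 + 1), MvPowerSeries.coeff (R := F) e (term k)
      = term 0 e
  rw [Finset.sum_eq_single_of_mem 0 (Finset.mem_range.2 (Nat.succ_pos _))]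
  · rfl
  · intro k _ hk; rw [h k hk]; simp

lemma phi21_zero {F : Type*} [Field F] (t : F) (x : MvPowerSeries (Fin 2) F) :
    phi21 (0:F) 0 0 0 (MvPowerSeries.C (σ := Fin 2) (R := F) t * x)
      = seriesSum (fun n => MvPowerSeries.C (σ := Fin 2) (R := F) (t ^ n) * x ^ n) := by
  unfold phi21
  congr 1
  funext n
  simp [qPoch, mul_pow, map_pow]

/-- at `q = 0` the hypergeometric-type series
`f(x₁,x₂,x₃; s₁,s₂,s₃, 0, t)` equals `∏_{1≤i<j≤3} (1 - x_j/x_i)/(1 - t x_j/x_i)`,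
i.e. `(1-y)(1-yw)(1-w) · ∏_{1≤i<j≤3} ∑_{n≥0} tⁿ r_{ij}ⁿ` with `r₁₂ = y`, `r₁₃ = yw`,
`r₂₃ = w`; this recovers the Hall–Littlewood raising-operator factors. -/
theorem stmt_13 {F : Type*} [Field F] (q t s₁ s₂ s₃ : F)
    (ht : t ≠ 0) (hs₁ : s₁ ≠ 0) (hs₂ : s₂ ≠ 0) (hs₃ : s₃ ≠ 0)
    (hq : q = 0) :
    seriesSum (fun k =>
      MvPowerSeries.C (σ := Fin 2) (R := F)
        (qPoch q (q * t⁻¹) k * qPoch q (q * t⁻¹) k * qPoch q t k * qPoch q t k /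
          (qPoch q q k * qPoch q (q * (s₁ / s₂)) k * qPoch q (q * (s₂ / s₃)) k *
            qPoch q (q * (s₁ / s₃)) k) * (q * (s₁ / s₃)) ^ k) *
      (MvPowerSeries.X 0 * MvPowerSeries.X 1) ^ k *
      ((1 - MvPowerSeries.X 0) * (1 - MvPowerSeries.X 0 * MvPowerSeries.X 1) *
        (1 - MvPowerSeries.X 1)) *
      phi21 q (q ^ (k + 1) * t⁻¹) (q * t⁻¹ * (s₁ / s₂)) (q ^ (k + 1) * (s₁ / s₂))
        (MvPowerSeries.C (σ := Fin 2) (R := F) t * MvPowerSeries.X 0) *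
      phi21 q (q ^ (k + 1) * t⁻¹) (q * t⁻¹ * (s₁ / s₃)) (q ^ (k + 1) * (s₁ / s₃))
        (MvPowerSeries.C (σ := Fin 2) (R := F) t * (MvPowerSeries.X 0 * MvPowerSeries.X 1)) *
      phi21 q (q ^ (k + 1) * t⁻¹) (q * t⁻¹ * (s₂ / s₃)) (q ^ (k + 1) * (s₂ / s₃))
        (MvPowerSeries.C (σ := Fin 2) (R := F) t * MvPowerSeries.X 1))
    = (1 - MvPowerSeries.X 0) * (1 - MvPowerSeries.X 0 * MvPowerSeries.X 1) *
        (1 - MvPowerSeries.X 1) *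
      (seriesSum (fun n => MvPowerSeries.C (σ := Fin 2) (R := F) (t ^ n) * MvPowerSeries.X 0 ^ n) *
       seriesSum (fun n => MvPowerSeries.C (σ := Fin 2) (R := F) (t ^ n) *
          (MvPowerSeries.X 0 * MvPowerSeries.X 1) ^ n) *
       seriesSum (fun n => MvPowerSeries.C (σ := Fin 2) (R := F) (t ^ n) * MvPowerSeries.X 1 ^ n)) := by
  subst hq
  rw [seriesSum_eq_zero_term]
  · have h12 := phi21_zero t (MvPowerSeries.X (R := F) 0)
    have h13 := phi21_zero t (MvPowerSeries.X (R := F) 0 * MvPowerSeries.X 1)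
    have h23 := phi21_zero t (MvPowerSeries.X (R := F) 1)
    simp only [zero_add, pow_one, zero_mul, pow_zero, one_mul, mul_one, qPoch,
      Finset.prod_range_zero, div_one, map_one, h12, h13, h23]
    ring
  · intro k hk
    simp [zero_pow hk]
end
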